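/- arXiv:1506.08626 — 5 statements merged into one kernel-verified Lean document; each statement's English description precedes it below -/
import Mathlib

section
/- Chain rule for chain differentials: Let X, Y, Z be real locally convex topological vector spaces, g : X → Y and f : Y → Z. Suppose g has chain differential δg(x;η) at the point x ∈ X in the direction η ∈ X, and f has chain differential δf(g(x); δg(x;η)) at the point g(x) in the direction δg(x;η). Then the composition f ∘ g has a chain differential at x in the direction η, and δ(f ∘ g)(x;η) = δf(g(x); δg(x;η)). -/
open Filter Topology

/-- `f` has chain differential `v` at the point `x` in the direction `η`:
for every sequence `ηm → η` and every sequence of nonzero reals `θm → 0`,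
`θm⁻¹ • (f (x + θm • ηm) - f x) → v`. -/
def HasChainDiff {X Y : Type*} [AddCommGroup X] [Module ℝ X] [TopologicalSpace X]
    [AddCommGroup Y] [Module ℝ Y] [TopologicalSpace Y]
    (f : X → Y) (x η : X) (v : Y) : Prop :=
  ∀ (ηm : ℕ → X) (θm : ℕ → ℝ), Tendsto ηm atTop (𝓝 η) → (∀ m, θm m ≠ 0) →
    Tendsto θm atTop (𝓝 (0 : ℝ)) →
    Tendsto (fun m => (θm m)⁻¹ • (f (x + θm m • ηm m) - f x)) atTop (𝓝 v)

/-- Chain rule for chain differentials (Bernhard). -/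
theorem chain_rule
    {X Y Z : Type*}
    [AddCommGroup X] [Module ℝ X] [TopologicalSpace X] [IsTopologicalAddGroup X]
    [ContinuousSMul ℝ X] [LocallyConvexSpace ℝ X]
    [AddCommGroup Y] [Module ℝ Y] [TopologicalSpace Y] [IsTopologicalAddGroup Y]
    [ContinuousSMul ℝ Y] [LocallyConvexSpace ℝ Y]
    [AddCommGroup Z] [Module ℝ Z] [TopologicalSpace Z] [IsTopologicalAddGroup Z]
    [ContinuousSMul ℝ Z] [LocallyConvexSpace ℝ Z]
    (g : X → Y) (f : Y → Z) (x η : X) (u : Y) (w : Z)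
    (hg : HasChainDiff g x η u) (hf : HasChainDiff f (g x) u w) :
    HasChainDiff (f ∘ g) x η w := by
  intro ηm θm hηm hθne hθ0
  set ζm : ℕ → Y := fun m => (θm m)⁻¹ • (g (x + θm m • ηm m) - g x) with hζ
  have hζu : Tendsto ζm atTop (𝓝 u) := hg ηm θm hηm hθne hθ0
  have key : ∀ m, g (x + θm m • ηm m) = g x + θm m • ζm m := by
    intro m
    simp [hζ, smul_smul, mul_inv_cancel₀ (hθne m)]
  have := hf ζm θm hζu hθne hθ0
  simpa [Function.comp, key] using this
end

section
/- Total chain differential: Let X₁, …, Xₙ and Y be real locally convex topological vector spaces, f : X₁ × … × Xₙ → Y, x ∈ X₁ × … × Xₙ, and η = (η₁, …, ηₙ) ∈ X₁ × … × Xₙ. Suppose for each 1 ≤ i ≤ n that (1) the partial chain differential δ_i f(z; ξ) exists for every point z in some open neighbourhood Ω of x and every direction ξ ∈ X_i, and (2) the map (z, ξ) ↦ δ_i f(z; ξ) is continuous on Ω × X_i. Then f has a (total) chain differential at x in the direction η, and δf(x; η) = Σ_{i=1}^n δ_i f(x; η_i). -/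
open Filter Topology

/-- Partial chain differential of `f` with respect to the `i`-th coordinate,
at the point `z` in the direction `ξ`. -/
def HasPartialChainDiff {ι : Type*} [DecidableEq ι] {X : ι → Type*} {Y : Type*}
    [∀ i, AddCommGroup (X i)] [∀ i, Module ℝ (X i)] [∀ i, TopologicalSpace (X i)]
    [AddCommGroup Y] [Module ℝ Y] [TopologicalSpace Y]
    (f : (∀ i, X i) → Y) (i : ι) (z : ∀ i, X i) (ξ : X i) (v : Y) : Prop :=
  HasChainDiff (fun t => f (Function.update z i t)) (z i) ξ v

section HB
variable {Y : Type*} [AddCommGroup Y] [Module ℝ Y]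

lemma exists_linfun (p : Seminorm ℝ Y) (w : Y) :
    ∃ ℓ : Y →ₗ[ℝ] ℝ, ℓ w = p w ∧ ∀ y, |ℓ y| ≤ p y := by
  by_cases hw : w = 0
  · refine ⟨0, by simp [hw], fun y => by simp [apply_nonneg]⟩
  · have hf : ∀ u : (LinearPMap.mkSpanSingleton (K := ℝ) (σ := RingHom.id ℝ) w (p w) hw).domain,
        (LinearPMap.mkSpanSingleton (K := ℝ) (σ := RingHom.id ℝ) w (p w) hw) u ≤ p u := by
      rintro ⟨u, hu⟩
      obtain ⟨c, rfl⟩ := Submodule.mem_span_singleton.mp hu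
      rw [LinearPMap.mkSpanSingleton'_apply, RingHom.id_apply]
      rcases le_or_gt 0 c with hc | hc
      · rw [smul_eq_mul, map_smul_eq_mul, Real.norm_eq_abs, abs_of_nonneg hc]
      · calc c • (p w : ℝ) ≤ 0 := smul_nonpos_of_nonpos_of_nonneg hc.le (apply_nonneg p w)
          _ ≤ p (c • w) := apply_nonneg _ _
    obtain ⟨g, hg1, hg2⟩ := exists_extension_of_le_sublinear
      (LinearPMap.mkSpanSingleton (σ := RingHom.id ℝ) w (p w) hw) p
      (fun c hc x => by rw [map_smul_eq_mul, Real.norm_eq_abs, abs_of_pos hc])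
      (fun x y => map_add_le_add p x y) hf
    refine ⟨g, ?_, fun y => ?_⟩
    · have := hg1 ⟨w, Submodule.mem_span_singleton_self w⟩
      rw [LinearPMap.mkSpanSingleton_apply] at this
      simpa using this
    · rcases abs_cases (g y) with ⟨h, _⟩ | ⟨h, _⟩
      · rw [h]; exact hg2 y
      · rw [h, ← map_neg]
        calc g (-y) ≤ p (-y) := hg2 (-y)
          _ = p y := map_neg_eq_map p y

lemma continuous_of_le_seminorm [TopologicalSpace Y] [IsTopologicalAddGroup Y]
    (p : Seminorm ℝ Y) (hp : Continuous p)
    (ℓ : Y →ₗ[ℝ] ℝ) (h : ∀ y, |ℓ y| ≤ p y) : Continuous ℓ := by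
  rw [continuous_iff_continuousAt]
  intro y₀
  have h1 : Tendsto (fun y => ℓ y - ℓ y₀) (𝓝 y₀) (𝓝 0) := by
    refine squeeze_zero_norm (a := fun y => p (y - y₀)) (fun y => ?_) ?_
    · rw [Real.norm_eq_abs, ← map_sub]; exact h (y - y₀)
    · have : Tendsto (fun y => p (y - y₀)) (𝓝 y₀) (𝓝 (p (y₀ - y₀))) :=
        (hp.tendsto _).comp (tendsto_id.sub tendsto_const_nhds)
      simpa using this
  have := h1.add (tendsto_const_nhds (x := ℓ y₀))
  have h2 : Tendsto (fun x => ℓ x) (𝓝 y₀) (𝓝 (ℓ y₀)) := by simpa using this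
  exact h2
end HB

section PiAux
variable {ι : Type*} [DecidableEq ι] {X : ι → Type*} [∀ j, AddCommGroup (X j)]

lemma update_add_single (z : ∀ j, X j) (i : ι) (a : X i) :
    Function.update z i (z i + a) = z + Pi.single i a := by
  funext j
  by_cases h : j = i
  · subst h; simp
  · simp [Function.update_of_ne h, Pi.single_eq_of_ne h]

lemma update_add_single' (z : ∀ j, X j) (i : ι) (a u : X i) :
    Function.update (z + Pi.single i a) i u = Function.update z i u := by
  funext j
  by_cases h : j = i
  · subst h; simp
  · simp [Function.update_of_ne h, Pi.single_eq_of_ne h]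
end PiAux

lemma key_lemma
    {n : ℕ} {X : Fin n → Type*} {Y : Type*}
    [∀ i, AddCommGroup (X i)] [∀ i, Module ℝ (X i)] [∀ i, TopologicalSpace (X i)]
    [∀ i, IsTopologicalAddGroup (X i)] [∀ i, ContinuousSMul ℝ (X i)]
    [AddCommGroup Y] [Module ℝ Y] [TopologicalSpace Y] [IsTopologicalAddGroup Y]
    [ContinuousSMul ℝ Y] [LocallyConvexSpace ℝ Y]
    (f : (∀ i, X i) → Y) (x : ∀ i, X i)
    (Ω : Set (∀ i, X i)) (hΩ : IsOpen Ω) (hx : x ∈ Ω)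
    (i : Fin n) (Di : (∀ j, X j) → X i → Y)
    (hD : ∀ z ∈ Ω, ∀ ξ : X i, HasPartialChainDiff f i z ξ (Di z ξ))
    (hDcont : ContinuousOn (fun q : (∀ j, X j) × X i => Di q.1 q.2) (Ω ×ˢ Set.univ))
    (zm : ℕ → ∀ j, X j) (hz : Tendsto zm atTop (𝓝 x))
    (ξ : X i) (ξm : ℕ → X i) (hξ : Tendsto ξm atTop (𝓝 ξ))
    (θm : ℕ → ℝ) (hθ0 : ∀ m, θm m ≠ 0) (hθ : Tendsto θm atTop (𝓝 0)) :
    Tendsto (fun m => (θm m)⁻¹ •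
        (f (Function.update (zm m) i (zm m i + θm m • ξm m)) - f (zm m)))
      atTop (𝓝 (Di x ξ)) := by
  set v := Di x ξ with hv
  refine ((with_gaugeSeminormFamily (𝕜 := ℝ) (E := Y)).tendsto_nhds _ _).mpr fun s ε hε => ?_
  set p := gaugeSeminormFamily ℝ Y s with hpdef
  have hpcont : Continuous p := (with_gaugeSeminormFamily (𝕜 := ℝ) (E := Y)).continuous_seminorm s
  -- continuity of Di near (x, ξ)
  have hV : {y : Y | p (y - v) < ε / 2} ∈ 𝓝 v := by
    have hc : Continuous fun y : Y => p (y - v) :=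
      hpcont.comp (continuous_id.sub continuous_const)
    exact (isOpen_lt hc continuous_const).mem_nhds (by simp [hε])
  have hcw : ContinuousWithinAt (fun q : (∀ j, X j) × X i => Di q.1 q.2)
      (Ω ×ˢ Set.univ) (x, ξ) := hDcont (x, ξ) ⟨hx, Set.mem_univ ξ⟩
  have hpre := hcw hV
  rw [Filter.mem_map, mem_nhdsWithin] at hpre
  obtain ⟨T, hTopen, hTmem, hTsub⟩ := hpre
  obtain ⟨A, B, hAopen, hBopen, hxA, hξB, hABsub⟩ := isOpen_prod_iff.mp hTopen x ξ hTmem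
  set A' := A ∩ Ω with hA'def
  have hA'mem : A' ∈ 𝓝 x := (hAopen.inter hΩ).mem_nhds ⟨hxA, hx⟩
  have hkey : ∀ z' ∈ A', ∀ ζ ∈ B, p (Di z' ζ - v) < ε / 2 := by
    intro z' hz' ζ hζ
    exact hTsub ⟨hABsub (Set.mk_mem_prod hz'.1 hζ), hz'.2, Set.mem_univ _⟩
  -- neighbourhoods of 0
  have hW : (fun w => x + w) ⁻¹' A' ∈ 𝓝 (0 : ∀ j, X j) := by
    have : ContinuousAt (fun w : ∀ j, X j => x + w) 0 :=
      (continuous_const.add continuous_id).continuousAt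
    have h0 : x + (0 : ∀ j, X j) = x := add_zero x
    exact this.preimage_mem_nhds (by rw [h0]; exact hA'mem)
  obtain ⟨W1, hW1, hW1sub⟩ := exists_nhds_zero_half hW
  obtain ⟨W2, ⟨hW2, hW2bal⟩, hW2sub⟩ := (nhds_basis_balanced ℝ (∀ j, X j)).mem_iff.mp hW1
  have h1 : ∀ᶠ m in atTop, zm m - x ∈ W2 := by
    have h' : Tendsto (fun m => zm m - x) atTop (𝓝 (x - x)) := hz.sub tendsto_const_nhds
    rw [sub_self] at h'
    exact h'.eventually_mem hW2
  have hsingle : Tendsto (fun m => θm m • Pi.single i (ξm m)) atTop (𝓝 (0 : ∀ j, X j)) := by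
    have hs : Tendsto (fun m => Pi.single i (ξm m)) atTop (𝓝 (Pi.single i ξ)) := by
      rw [tendsto_pi_nhds]
      intro j
      by_cases hj : j = i
      · subst hj; simpa using hξ
      · simp only [Pi.single_eq_of_ne hj]
        exact tendsto_const_nhds
    have := hθ.smul hs
    simpa using this
  have h2 : ∀ᶠ m in atTop, θm m • Pi.single i (ξm m) ∈ W2 := hsingle.eventually_mem hW2
  have h3 : ∀ᶠ m in atTop, ξm m ∈ B := hξ.eventually_mem (hBopen.mem_nhds hξB)
  filter_upwards [h1, h2, h3] with m hm1 hm2 hm3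
  -- now work with fixed m
  set pt : ℝ → ∀ j, X j := fun t => zm m + (t * θm m) • Pi.single i (ξm m) with hptdef
  have hptA' : ∀ t ∈ Set.Icc (0 : ℝ) 1, pt t ∈ A' := by
    intro t ht
    have hmem2 : t • (θm m • Pi.single i (ξm m)) ∈ W2 :=
      hW2bal.smul_mem (by rw [Real.norm_eq_abs, abs_of_nonneg ht.1]; exact ht.2) hm2
    have hsum := hW1sub _ (hW2sub hm1) _ (hW2sub hmem2)
    rw [Set.mem_preimage] at hsum
    have heq : x + ((zm m - x) + t • (θm m • Pi.single i (ξm m))) = pt t := by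
      simp only [hptdef, mul_smul]
      abel
    rwa [heq] at hsum
  have hptΩ : ∀ t ∈ Set.Icc (0 : ℝ) 1, pt t ∈ Ω := fun t ht => (hptA' t ht).2
  -- structure of pt
  have hpt_add : ∀ t c : ℝ,
      Function.update (pt t) i (pt t i + (c * θm m) • ξm m) = pt (t + c) := by
    intro t c
    rw [update_add_single (pt t) i ((c * θm m) • ξm m)]
    simp only [hptdef, Pi.single_smul]
    rw [add_assoc, ← add_smul, ← add_mul]
  have hpt0 : pt 0 = zm m := by simp [hptdef]
  have hupdate : ∀ t : ℝ, (fun u => f (Function.update (pt t) i u))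
      = fun u => f (Function.update (zm m) i u) := by
    intro t
    funext u
    simp only [hptdef, ← Pi.single_smul, update_add_single']
  -- the function φ = f ∘ pt and the linear functional
  set w : Y := (θm m)⁻¹ • (f (pt 1) - f (pt 0)) - v with hwdef
  obtain ⟨ℓ, hℓw, hℓle⟩ := exists_linfun p w
  have hℓcont : Continuous ℓ := continuous_of_le_seminorm p hpcont ℓ hℓle
  -- derivative of ℓ ∘ f ∘ pt
  have hderiv : ∀ t ∈ Set.Icc (0 : ℝ) 1,
      HasDerivAt (fun s => ℓ (f (pt s))) (θm m * ℓ (Di (pt t) (ξm m))) t := by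
    intro t ht
    have hchain : HasChainDiff (fun u => f (Function.update (pt t) i u)) (pt t i)
        (ξm m) (Di (pt t) (ξm m)) := hD _ (hptΩ t ht) (ξm m)
    rw [hasDerivAt_iff_tendsto_slope]
    rw [tendsto_iff_seq_tendsto]
    intro u hu
    have hne : ∀ᶠ k in atTop, u k ≠ t := by
      have := hu self_mem_nhdsWithin
      simpa using this
    have hut : Tendsto u atTop (𝓝 t) := hu.mono_right nhdsWithin_le_nhds
    set θ' : ℕ → ℝ := fun k => if u k = t then 1 else (u k - t) * θm m with hθ'def
    have hθ'0 : ∀ k, θ' k ≠ 0 := by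
      intro k
      by_cases h : u k = t
      · simp [hθ'def, h]
      · simp only [hθ'def, if_neg h]
        exact mul_ne_zero (sub_ne_zero.mpr h) (hθ0 m)
    have hθ'lim : Tendsto θ' atTop (𝓝 0) := by
      have hmul : Tendsto (fun k => (u k - t) * θm m) atTop (𝓝 ((t - t) * θm m)) :=
        (hut.sub tendsto_const_nhds).mul_const _
      rw [sub_self, zero_mul] at hmul
      refine hmul.congr' ?_
      filter_upwards [hne] with k hk
      rw [hθ'def]; simp [if_neg hk]
    have hclim := hchain (fun _ => ξm m) θ' tendsto_const_nhds hθ'0 hθ'lim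
    have htarget := ((hℓcont.tendsto _).comp hclim).const_mul (θm m)
    refine htarget.congr' ?_
    filter_upwards [hne] with k hk
    have hθ'k : θ' k = (u k - t) * θm m := if_neg hk
    have hpteq : Function.update (pt t) i (pt t i + θ' k • ξm m) = pt (u k) := by
      rw [hθ'k, hpt_add t (u k - t), add_sub_cancel]
    have hbase : Function.update (pt t) i (pt t i) = pt t := Function.update_eq_self _ _
    simp only [Function.comp_apply]
    rw [slope_def_field]
    rw [hpteq, hbase]
    rw [map_smul, smul_eq_mul]
    rw [map_sub, hθ'k]
    have hsub : u k - t ≠ 0 := sub_ne_zero.mpr hk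
    field_simp [hθ0 m, hsub]
  -- mean value inequality
  have hψ : ∀ t ∈ Set.Icc (0 : ℝ) 1,
      HasDerivWithinAt (fun s => ℓ (f (pt s)) - s * (θm m * ℓ v))
        (θm m * ℓ (Di (pt t) (ξm m)) - θm m * ℓ v) (Set.Icc 0 1) t :=
    fun t ht => ((hderiv t ht).sub (hasDerivAt_mul_const _)).hasDerivWithinAt
  have hbound : ∀ t ∈ Set.Ico (0 : ℝ) 1,
      ‖θm m * ℓ (Di (pt t) (ξm m)) - θm m * ℓ v‖ ≤ |θm m| * (ε / 2) := by
    intro t ht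
    have htIcc : t ∈ Set.Icc (0 : ℝ) 1 := ⟨ht.1, ht.2.le⟩
    rw [← mul_sub, ← map_sub, Real.norm_eq_abs, abs_mul]
    refine mul_le_mul_of_nonneg_left ?_ (abs_nonneg _)
    calc |ℓ (Di (pt t) (ξm m) - v)| ≤ p (Di (pt t) (ξm m) - v) := hℓle _
      _ ≤ ε / 2 := (hkey _ (hptA' t htIcc) _ hm3).le
  have hmvt := norm_image_sub_le_of_norm_deriv_le_segment' hψ hbound 1
    (Set.right_mem_Icc.mpr zero_le_one)
  -- conclude
  have hre1 : Function.update (zm m) i (zm m i + θm m • ξm m) = pt 1 := by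
    have := hpt_add 0 1
    rw [hpt0, one_mul, zero_add] at this
    exact this
  have hre0 : zm m = pt 0 := hpt0.symm
  rw [hre1]
  nth_rewrite 1 [hre0]
  show p w < ε
  have hcalc : ℓ w = (θm m)⁻¹ * ((ℓ (f (pt 1)) - 1 * (θm m * ℓ v))
      - (ℓ (f (pt 0)) - 0 * (θm m * ℓ v))) := by
    rw [hwdef, map_sub, map_smul, smul_eq_mul, map_sub]
    field_simp [hθ0 m]
    ring
  have habs : |θm m| ≠ 0 := abs_ne_zero.mpr (hθ0 m)
  calc p w = ℓ w := hℓw.symm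
    _ ≤ |ℓ w| := le_abs_self _
    _ = |θm m|⁻¹ * ‖(ℓ (f (pt 1)) - 1 * (θm m * ℓ v))
        - (ℓ (f (pt 0)) - 0 * (θm m * ℓ v))‖ := by
      rw [hcalc, abs_mul, abs_inv, Real.norm_eq_abs]
    _ ≤ |θm m|⁻¹ * (|θm m| * (ε / 2) * (1 - 0)) := by
      refine mul_le_mul_of_nonneg_left hmvt (by positivity)
    _ = ε / 2 := by field_simp; norm_num
    _ < ε := by linarith

/-- Total chain differential: if all partial chain differentials of `f` exist on an
open neighbourhood `Ω` of `x` and are jointly continuous there, then `f` has a total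
chain differential at `x`, equal to the sum of the partial chain differentials. -/
theorem total_chain_differential
    {n : ℕ} {X : Fin n → Type*} {Y : Type*}
    [∀ i, AddCommGroup (X i)] [∀ i, Module ℝ (X i)] [∀ i, TopologicalSpace (X i)]
    [∀ i, IsTopologicalAddGroup (X i)] [∀ i, ContinuousSMul ℝ (X i)]
    [∀ i, LocallyConvexSpace ℝ (X i)]
    [AddCommGroup Y] [Module ℝ Y] [TopologicalSpace Y] [IsTopologicalAddGroup Y]
    [ContinuousSMul ℝ Y] [LocallyConvexSpace ℝ Y]
    (f : (∀ i, X i) → Y) (x η : ∀ i, X i)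
    (Ω : Set (∀ i, X i)) (hΩ : IsOpen Ω) (hx : x ∈ Ω)
    (D : ∀ i, (∀ j, X j) → X i → Y)
    (hD : ∀ i, ∀ z ∈ Ω, ∀ ξ : X i, HasPartialChainDiff f i z ξ (D i z ξ))
    (hDcont : ∀ i, ContinuousOn (fun p : (∀ j, X j) × X i => D i p.1 p.2)
      (Ω ×ˢ (Set.univ : Set (X i)))) :
    HasChainDiff f x η (∑ i, D i x (η i)) := by
  intro ηm θm hηm hθ0 hθ
  set Z : Fin n → ℕ → ∀ j, X j :=
    fun i m j => if (j : ℕ) < (i : ℕ) then x j + θm m • ηm m j else x j with hZdef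
  have hterm : ∀ i : Fin n, Tendsto (fun m => (θm m)⁻¹ •
      (f (Function.update (Z i m) i (Z i m i + θm m • ηm m i)) - f (Z i m)))
      atTop (𝓝 (D i x (η i))) := by
    intro i
    refine key_lemma f x Ω hΩ hx i (D i) (hD i) (hDcont i) (Z i) ?_ (η i)
      (fun m => ηm m i) (tendsto_pi_nhds.mp hηm i) θm hθ0 hθ
    rw [tendsto_pi_nhds]
    intro j
    by_cases hj : (j : ℕ) < (i : ℕ)
    · simp only [hZdef, if_pos hj]
      have hj' : Tendsto (fun m => ηm m j) atTop (𝓝 (η j)) := tendsto_pi_nhds.mp hηm j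
      have h0 : Tendsto (fun m => θm m • ηm m j) atTop (𝓝 ((0 : ℝ) • η j)) := hθ.smul hj'
      rw [zero_smul] at h0
      simpa using tendsto_const_nhds.add h0
    · simp only [hZdef, if_neg hj]
      exact tendsto_const_nhds
  have hsum := tendsto_finset_sum Finset.univ fun i (_ : i ∈ Finset.univ) => hterm i
  refine hsum.congr fun m => ?_
  set W : ℕ → ∀ j, X j :=
    fun k j => if (j : ℕ) < k then x j + θm m • ηm m j else x j with hWdef
  have hupd : ∀ i : Fin n,
      Function.update (Z i m) i (Z i m i + θm m • ηm m i) = W ((i : ℕ) + 1) := by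
    intro i
    funext j
    by_cases hji : j = i
    · subst hji
      rw [Function.update_self]
      simp [hZdef, hWdef, lt_irrefl]
    · rw [Function.update_of_ne hji]
      have hne : (j : ℕ) ≠ (i : ℕ) := fun h => hji (Fin.ext h)
      by_cases h2 : (j : ℕ) < (i : ℕ)
      · simp only [hZdef, hWdef, if_pos h2, if_pos (by omega : (j : ℕ) < (i : ℕ) + 1)]
      · simp only [hZdef, hWdef, if_neg h2, if_neg (by omega : ¬ (j : ℕ) < (i : ℕ) + 1)]
  have hZW : ∀ i : Fin n, Z i m = W (i : ℕ) := fun i => rfl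
  calc ∑ i : Fin n, (θm m)⁻¹ •
        (f (Function.update (Z i m) i (Z i m i + θm m • ηm m i)) - f (Z i m))
      = ∑ i : Fin n, (θm m)⁻¹ • (f (W ((i : ℕ) + 1)) - f (W (i : ℕ))) := by
        refine Finset.sum_congr rfl fun i _ => ?_
        rw [hupd i, hZW i]
    _ = (θm m)⁻¹ • ∑ i : Fin n, (f (W ((i : ℕ) + 1)) - f (W (i : ℕ))) :=
        (Finset.smul_sum).symm
    _ = (θm m)⁻¹ • (f (W n) - f (W 0)) := by
        rw [Fin.sum_univ_eq_sum_range (fun k => f (W (k + 1)) - f (W k)) n,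
          Finset.sum_range_sub (fun k => f (W k)) n]
    _ = (θm m)⁻¹ • (f (x + θm m • ηm m) - f x) := by
        have h1 : W n = x + θm m • ηm m := by
          funext j
          simp [hWdef, j.isLt]
        have h0 : W 0 = x := by funext j; simp [hWdef]
        rw [h1, h0]
end

section
/- Total chain differential in two real-valued variables: Let X₁ and X₂ be real locally convex topological vector spaces, f : X₁ × X₂ → ℝ, x = (x₁, x₂) ∈ X₁ × X₂, and (η, ξ) ∈ X₁ × X₂. Suppose that for i = 1, 2 the partial chain differential δ_i f(z; ·) exists at every point z in some open neighbourhood Ω of x in every direction, and that the maps (z, ν) ↦ δ₁ f(z; ν) and (z, ν) ↦ δ₂ f(z; ν) are continuous on Ω × X₁ and Ω × X₂ respectively. Then f has a chain differential at x in the direction (η, ξ), and δf(x; (η, ξ)) = δ₁ f(x; η) + δ₂ f(x; ξ). -/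
open Filter Topology

lemma hcd_unique {X : Type*} [AddCommGroup X] [Module ℝ X] [TopologicalSpace X]
    {g : X → ℝ} {p ν : X} {v w : ℝ}
    (hv : HasChainDiff g p ν v) (hw : HasChainDiff g p ν w) : v = w := by
  have hθ : Tendsto (fun n : ℕ => (1 : ℝ) / (n + 1)) atTop (𝓝 0) :=
    tendsto_one_div_add_atTop_nhds_zero_nat
  have hθ0 : ∀ n : ℕ, (1 : ℝ) / (n + 1) ≠ 0 := fun n => by positivity
  exact tendsto_nhds_unique
    (hv (fun _ => ν) _ tendsto_const_nhds hθ0 hθ)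
    (hw (fun _ => ν) _ tendsto_const_nhds hθ0 hθ)

lemma hcd_smul {X : Type*} [AddCommGroup X] [Module ℝ X] [TopologicalSpace X]
    [ContinuousConstSMul ℝ X]
    {g : X → ℝ} {p ν : X} {v : ℝ} {c : ℝ} (hc : c ≠ 0)
    (h : HasChainDiff g p ν v) : HasChainDiff g p (c • ν) (c * v) := by
  intro μm θm hμ hθ0 hθ
  have hμ' : Tendsto (fun m => c⁻¹ • μm m) atTop (𝓝 ν) := by
    have := hμ.const_smul c⁻¹
    simpa [smul_smul, inv_mul_cancel₀ hc] using this
  have key := h (fun m => c⁻¹ • μm m) (fun m => c * θm m) hμ'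
    (fun m => mul_ne_zero hc (hθ0 m)) (by simpa using hθ.const_mul c)
  have key2 := key.const_smul c
  refine key2.congr fun m => ?_
  have h1 : (c * θm m) • (c⁻¹ • μm m) = θm m • μm m := by
    rw [smul_smul]; congr 1; field_simp
  rw [h1, smul_eq_mul, smul_eq_mul, smul_eq_mul, ← mul_assoc]
  congr 1
  field_simp

lemma hcd_hasDerivAt {X : Type*} [AddCommGroup X] [Module ℝ X] [TopologicalSpace X]
    {g : X → ℝ} {p ν : X} {v : ℝ} {s₀ : ℝ}
    (h : HasChainDiff g (p + s₀ • ν) ν v) :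
    HasDerivAt (fun s : ℝ => g (p + s • ν)) v s₀ := by
  rw [hasDerivAt_iff_tendsto_slope, tendsto_iff_seq_tendsto]
  intro u hu
  have hne : ∀ᶠ m in atTop, u m ≠ s₀ := by
    have : {s₀}ᶜ ∈ 𝓝[≠] s₀ := self_mem_nhdsWithin
    exact hu this
  have hu0 : Tendsto u atTop (𝓝 s₀) := hu.mono_right nhdsWithin_le_nhds
  set θ : ℕ → ℝ := fun m => if u m = s₀ then 1 / (m + 1) else u m - s₀ with hθdef
  have hθ0 : ∀ m, θ m ≠ 0 := by
    intro m; by_cases hm : u m = s₀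
    · simp only [hθdef, if_pos hm]; positivity
    · simp only [hθdef, if_neg hm]; exact sub_ne_zero.2 hm
  have hθt : Tendsto θ atTop (𝓝 0) := by
    apply Tendsto.congr' _ (by simpa using hu0.sub_const s₀)
    filter_upwards [hne] with m hm
    simp [hθdef, hm]
  have key := h (fun _ => ν) θ tendsto_const_nhds hθ0 hθt
  refine key.congr' ?_
  filter_upwards [hne] with m hm
  have hθm : θ m = u m - s₀ := by simp [hθdef, hm]
  simp only [hθm, Function.comp, slope_def_field]
  rw [div_eq_inv_mul, ← smul_eq_mul]
  congr 2
  rw [add_assoc, ← add_smul]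
  ring_nf

/-- Total chain differential in two variables: if both partial chain differentials of
`f : X₁ × X₂ → ℝ` exist on an open neighbourhood `Ω` of `x` and are jointly continuous
there, then `f` has a chain differential at `x` in the direction `(η, ξ)`, equal to
`δ₁f(x;η) + δ₂f(x;ξ)`. -/
theorem total_chain_differential_two_vars
    {X₁ X₂ : Type*}
    [AddCommGroup X₁] [Module ℝ X₁] [TopologicalSpace X₁] [IsTopologicalAddGroup X₁]
    [ContinuousSMul ℝ X₁] [LocallyConvexSpace ℝ X₁]
    [AddCommGroup X₂] [Module ℝ X₂] [TopologicalSpace X₂] [IsTopologicalAddGroup X₂]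
    [ContinuousSMul ℝ X₂] [LocallyConvexSpace ℝ X₂]
    (f : X₁ × X₂ → ℝ) (x : X₁ × X₂) (η : X₁) (ξ : X₂)
    (Ω : Set (X₁ × X₂)) (hΩ : IsOpen Ω) (hx : x ∈ Ω)
    (D₁ : X₁ × X₂ → X₁ → ℝ) (D₂ : X₁ × X₂ → X₂ → ℝ)
    (hD₁ : ∀ z ∈ Ω, ∀ ν : X₁, HasChainDiff (fun t => f (t, z.2)) z.1 ν (D₁ z ν))
    (hD₂ : ∀ z ∈ Ω, ∀ ν : X₂, HasChainDiff (fun t => f (z.1, t)) z.2 ν (D₂ z ν))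
    (hD₁cont : ContinuousOn (fun p : (X₁ × X₂) × X₁ => D₁ p.1 p.2)
      (Ω ×ˢ (Set.univ : Set X₁)))
    (hD₂cont : ContinuousOn (fun p : (X₁ × X₂) × X₂ => D₂ p.1 p.2)
      (Ω ×ˢ (Set.univ : Set X₂))) :
    HasChainDiff f x (η, ξ) (D₁ x η + D₂ x ξ) := by
  intro ηm θm hη hθ0 hθ
  -- component sequences
  have ha : Tendsto (fun m => (ηm m).1) atTop (𝓝 η) :=
    (continuous_fst.tendsto _).comp hη
  have hb : Tendsto (fun m => (ηm m).2) atTop (𝓝 ξ) :=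
    (continuous_snd.tendsto _).comp hη
  -- open box inside Ω
  obtain ⟨U₁, U₂, hU₁, hU₂, hx₁, hx₂, hsub⟩ :=
    isOpen_prod_iff.1 hΩ x.1 x.2 (by simpa using hx)
  -- convex neighbourhood of x.1 inside U₁
  obtain ⟨S, hS, hSconv, hSU⟩ :=
    (locallyConvexSpace_iff_exists_convex_subset ℝ X₁).1 inferInstance x.1 U₁
      (hU₁.mem_nhds hx₁)
  have hx1S : x.1 ∈ S := mem_of_mem_nhds hS
  have hseg : ∀ v : X₁, x.1 + v ∈ S → ∀ s ∈ Set.Icc (0:ℝ) 1, x.1 + s • v ∈ S := by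
    intro v hv s hs
    have key : x.1 + s • v = (1 - s) • x.1 + s • (x.1 + v) := by module
    rw [key]
    exact hSconv hx1S hv (by linarith [hs.1, hs.2]) hs.1 (by ring)
  -- smallness
  have hsa : Tendsto (fun m => θm m • (ηm m).1) atTop (𝓝 (0 : X₁)) := by
    simpa using hθ.smul ha
  have hsb : Tendsto (fun m => θm m • (ηm m).2) atTop (𝓝 (0 : X₂)) := by
    simpa using hθ.smul hb
  have hmemS : ∀ᶠ m in atTop, x.1 + θm m • (ηm m).1 ∈ S := by
    have : Tendsto (fun m => x.1 + θm m • (ηm m).1) atTop (𝓝 x.1) := by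
      simpa using (tendsto_const_nhds.add hsa)
    exact this.eventually_mem hS
  have hmemU₂ : ∀ᶠ m in atTop, x.2 + θm m • (ηm m).2 ∈ U₂ := by
    have : Tendsto (fun m => x.2 + θm m • (ηm m).2) atTop (𝓝 x.2) := by
      simpa using (tendsto_const_nhds.add hsb)
    exact this.eventually_mem (hU₂.mem_nhds hx₂)
  -- the mean-value decomposition, eventually
  have hev : ∀ᶠ m in atTop, ∃ c, c ∈ Set.Ioo (0:ℝ) 1 ∧
      (θm m)⁻¹ • (f (x + θm m • ηm m) - f x)
        = D₁ (x.1 + c • (θm m • (ηm m).1), x.2 + θm m • (ηm m).2) ((ηm m).1)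
          + (θm m)⁻¹ • (f (x.1, x.2 + θm m • (ηm m).2) - f x) := by
    filter_upwards [hmemS, hmemU₂] with m hmS hmU
    set θ := θm m with hθdef
    set A := θm m • (ηm m).1 with hA
    set y₂ := x.2 + θm m • (ηm m).2 with hy₂
    have hzΩ : ∀ s ∈ Set.Icc (0:ℝ) 1, (x.1 + s • A, y₂) ∈ Ω := fun s hs =>
      hsub (Set.mk_mem_prod (hSU (hseg A hmS s hs)) hmU)
    have hderiv : ∀ s ∈ Set.Icc (0:ℝ) 1,
        HasDerivAt (fun s : ℝ => f (x.1 + s • A, y₂))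
          (D₁ (x.1 + s • A, y₂) A) s := by
      intro s hs
      exact hcd_hasDerivAt (hD₁ _ (hzΩ s hs) A)
    obtain ⟨c, hc, hceq⟩ := exists_hasDerivAt_eq_slope
      (fun s : ℝ => f (x.1 + s • A, y₂)) (fun s => D₁ (x.1 + s • A, y₂) A)
      one_pos
      (fun s hs => ((hderiv s hs).continuousAt).continuousWithinAt)
      (fun s hs => hderiv s (Set.mem_Icc_of_Ioo hs))
    refine ⟨c, hc, ?_⟩
    -- homogeneity at the MVT point
    have hzc : (x.1 + c • A, y₂) ∈ Ω := hzΩ c (Set.mem_Icc_of_Ioo hc)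
    have hhom : D₁ (x.1 + c • A, y₂) A = θ * D₁ (x.1 + c • A, y₂) ((ηm m).1) :=
      hcd_unique (g := fun t => f (t, y₂)) (p := x.1 + c • A) (ν := A)
        (hD₁ _ hzc A)
        (hcd_smul (hθ0 m) (hD₁ _ hzc ((ηm m).1)))
    have hx' : x + θm m • ηm m = (x.1 + A, y₂) := rfl
    have h10 : f (x.1 + A, y₂) - f (x.1, y₂) = θ * D₁ (x.1 + c • A, y₂) ((ηm m).1) := by
      rw [← hhom, hceq]
      simp
    rw [hx']
    rw [show f (x.1 + A, y₂) - f x = (f (x.1 + A, y₂) - f (x.1, y₂)) + (f (x.1, y₂) - f x)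
      by ring]
    rw [h10]
    simp only [smul_eq_mul]
    rw [mul_add, ← mul_assoc, inv_mul_cancel₀ (hθ0 m), one_mul]
  -- choose the MVT points
  classical
  set cs : ℕ → ℝ := fun m =>
    if h : ∃ c, c ∈ Set.Ioo (0:ℝ) 1 ∧
      (θm m)⁻¹ • (f (x + θm m • ηm m) - f x)
        = D₁ (x.1 + c • (θm m • (ηm m).1), x.2 + θm m • (ηm m).2) ((ηm m).1)
          + (θm m)⁻¹ • (f (x.1, x.2 + θm m • (ηm m).2) - f x)
    then h.choose else 1/2 with hcs
  have hcs01 : ∀ m, cs m ∈ Set.Icc (0:ℝ) 1 := by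
    intro m
    by_cases h : ∃ c, c ∈ Set.Ioo (0:ℝ) 1 ∧
      (θm m)⁻¹ • (f (x + θm m • ηm m) - f x)
        = D₁ (x.1 + c • (θm m • (ηm m).1), x.2 + θm m • (ηm m).2) ((ηm m).1)
          + (θm m)⁻¹ • (f (x.1, x.2 + θm m • (ηm m).2) - f x)
    · simp only [hcs, dif_pos h]
      exact Set.mem_Icc_of_Ioo h.choose_spec.1
    · simp only [hcs, dif_neg h]; norm_num
  have hcseq : ∀ᶠ m in atTop,
      (θm m)⁻¹ • (f (x + θm m • ηm m) - f x)
        = D₁ (x.1 + cs m • (θm m • (ηm m).1), x.2 + θm m • (ηm m).2) ((ηm m).1)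
          + (θm m)⁻¹ • (f (x.1, x.2 + θm m • (ηm m).2) - f x) := by
    filter_upwards [hev] with m h
    simp only [hcs, dif_pos h]
    exact h.choose_spec.2
  -- limit of the first term
  have hcθ : Tendsto (fun m => cs m * θm m) atTop (𝓝 (0:ℝ)) := by
    apply squeeze_zero_norm (fun m => ?_) (by simpa using hθ.norm)
    have h01 := hcs01 m
    rw [norm_mul]
    calc ‖cs m‖ * ‖θm m‖ ≤ 1 * ‖θm m‖ := by
          apply mul_le_mul_of_nonneg_right _ (norm_nonneg _)
          rw [Real.norm_eq_abs, abs_le]; exact ⟨by linarith [h01.1], h01.2⟩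
      _ = ‖θm m‖ := one_mul _
  have hz1 : Tendsto (fun m => x.1 + cs m • (θm m • (ηm m).1)) atTop (𝓝 x.1) := by
    have : Tendsto (fun m => (cs m * θm m) • (ηm m).1) atTop (𝓝 (0:X₁)) := by
      simpa using hcθ.smul ha
    simp only [smul_smul]
    simpa using tendsto_const_nhds.add this
  have hz2 : Tendsto (fun m => x.2 + θm m • (ηm m).2) atTop (𝓝 x.2) := by
    simpa using tendsto_const_nhds.add hsb
  have hzc : Tendsto (fun m => ((x.1 + cs m • (θm m • (ηm m).1),
      x.2 + θm m • (ηm m).2), (ηm m).1)) atTop (𝓝 ((x.1, x.2), η)) :=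
    (hz1.prodMk_nhds hz2).prodMk_nhds ha
  have hmemnhds : Ω ×ˢ (Set.univ : Set X₁) ∈ 𝓝 ((x.1, x.2), η) := by
    apply (hΩ.prod isOpen_univ).mem_nhds
    exact ⟨by simpa using hx, trivial⟩
  have hT1 : Tendsto (fun m =>
      D₁ (x.1 + cs m • (θm m • (ηm m).1), x.2 + θm m • (ηm m).2) ((ηm m).1))
      atTop (𝓝 (D₁ x η)) := by
    have := (hD₁cont.continuousAt hmemnhds).tendsto.comp hzc
    exact this
  -- limit of the second term
  have hT2 : Tendsto (fun m =>
      (θm m)⁻¹ • (f (x.1, x.2 + θm m • (ηm m).2) - f x)) atTop (𝓝 (D₂ x ξ)) := by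
    have := hD₂ x hx ξ (fun m => (ηm m).2) θm hb hθ0 hθ
    simpa using this
  exact (hT1.add hT2).congr' (by filter_upwards [hcseq] with m h using h.symm)
end

section
/- General higher-order product rule (Leibniz rule for chain differentials): Let X be a real locally convex topological vector space, and let f : X → ℝ and g : X → ℝ have higher-order chain differentials δ^{|I|} f(x; (η_i)_{i∈I}) and δ^{|I|} g(x; (η_i)_{i∈I}) at the point x ∈ X in all the sequences of directions indexed by every subset I ⊆ {1,…,n} of a fixed family of directions η₁, …, ηₙ ∈ X. Then the pointwise product f · g has an n-th order chain differential at x in the directions η₁, …, ηₙ, and δⁿ(f · g)(x; η₁, …, ηₙ) = Σ_{π ⊆ {1,…,n}} δ^{|π|} f(x; (η_i)_{i∈π}) · δ^{n−|π|} g(x; (η_i)_{i∈π^c}), where the sum ranges over all subsets π of {1,…,n} and π^c = {1,…,n} \ π. -/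
open Filter Topology

/-- `n`-th order chain differential, defined recursively: `δⁿ f(x; η₁,…,ηₙ)` is the
chain differential of `y ↦ δ^{n-1} f(y; η₁,…,η_{n-1})` (a function defined on a
neighbourhood of `x`) at `x` in the direction `ηₙ`; by convention `δ⁰ f(x) = f x`. -/
def HasChainDiffN {X Y : Type*} [AddCommGroup X] [Module ℝ X] [TopologicalSpace X]
    [AddCommGroup Y] [Module ℝ Y] [TopologicalSpace Y]
    (f : X → Y) : (n : ℕ) → (Fin n → X) → X → Y → Prop
  | 0, _, x, v => f x = v
  | n + 1, η, x, v => ∃ D : X → Y,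
      (∀ᶠ y in 𝓝 x, HasChainDiffN f n (Fin.init η) y (D y)) ∧
      HasChainDiff D x (η (Fin.last n)) v

/-- The directions `(η_i)_{i ∈ I}`, listed in increasing order of the index. -/
def dirsOf {X : Type*} {n : ℕ} (η : Fin n → X) (I : Finset (Fin n)) : Fin I.card → X :=
  fun j => η ((I.orderIsoOfFin rfl j : I) : Fin n)

section Aux

variable {X : Type*} [AddCommGroup X] [Module ℝ X] [TopologicalSpace X]
  [IsTopologicalAddGroup X] [ContinuousSMul ℝ X]

private lemma tendsto_base_pt {x η : X} {ηm : ℕ → X} {θm : ℕ → ℝ}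
    (hη : Tendsto ηm atTop (𝓝 η)) (hθ : Tendsto θm atTop (𝓝 (0 : ℝ))) :
    Tendsto (fun m => x + θm m • ηm m) atTop (𝓝 x) := by
  have h1 : Tendsto (fun m => θm m • ηm m) atTop (𝓝 ((0 : ℝ) • η)) := hθ.smul hη
  rw [zero_smul] at h1
  have h2 := (tendsto_const_nhds (x := x) (f := (atTop : Filter ℕ))).add h1
  simpa using h2

theorem hasChainDiff_unique {f : X → ℝ} {x η : X} {v w : ℝ}
    (hv : HasChainDiff f x η v) (hw : HasChainDiff f x η w) : v = w := by
  have hθ0 : ∀ m : ℕ, (1 / (m + 1) : ℝ) ≠ 0 := fun m => by positivity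
  have hθ : Tendsto (fun m : ℕ => (1 / (m + 1) : ℝ)) atTop (𝓝 0) :=
    tendsto_one_div_add_atTop_nhds_zero_nat
  exact tendsto_nhds_unique (hv _ _ tendsto_const_nhds hθ0 hθ)
    (hw _ _ tendsto_const_nhds hθ0 hθ)

theorem hasChainDiff_congr {D D' : X → ℝ} {x η : X} {v : ℝ}
    (hDD' : D =ᶠ[𝓝 x] D') (h : HasChainDiff D x η v) : HasChainDiff D' x η v := by
  intro ηm θm hη hθ0 hθ
  refine (h ηm θm hη hθ0 hθ).congr' ?_
  have hpt := tendsto_base_pt (x := x) hη hθ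
  filter_upwards [hpt.eventually hDD'] with m hm
  rw [hm, hDD'.self_of_nhds]

theorem hasChainDiffN_zero_iff {f : X → ℝ} {d : Fin 0 → X} {x : X} {v : ℝ} :
    HasChainDiffN f 0 d x v ↔ f x = v := Iff.rfl

theorem hasChainDiffN_succ_iff {f : X → ℝ} {k : ℕ} {d : Fin (k + 1) → X} {x : X} {v : ℝ} :
    HasChainDiffN f (k + 1) d x v ↔ ∃ D : X → ℝ,
      (∀ᶠ y in 𝓝 x, HasChainDiffN f k (Fin.init d) y (D y)) ∧
      HasChainDiff D x (d (Fin.last k)) v := Iff.rfl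

theorem hasChainDiffN_unique {f : X → ℝ} :
    ∀ {k : ℕ} {d : Fin k → X} {x : X} {v w : ℝ},
      HasChainDiffN f k d x v → HasChainDiffN f k d x w → v = w := by
  intro k
  induction k with
  | zero =>
    intro d x v w hv hw
    rw [hasChainDiffN_zero_iff] at hv hw
    rw [← hv, hw]
  | succ k ih =>
    intro d x v w hv hw
    obtain ⟨D, hD, hd⟩ := hv
    obtain ⟨D', hD', hd'⟩ := hw
    have hDD' : D =ᶠ[𝓝 x] D' := by
      filter_upwards [hD, hD'] with y h1 h2
      exact ih h1 h2
    exact hasChainDiff_unique (hasChainDiff_congr hDD' hd) hd'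

theorem hasChainDiff_mul {F G : X → ℝ} {x d : X} {a b : ℝ}
    (hF : HasChainDiff F x d a) (hG : HasChainDiff G x d b) :
    HasChainDiff (fun y => F y * G y) x d (a * G x + F x * b) := by
  intro ηm θm hη hθ0 hθ
  have h1 := hF ηm θm hη hθ0 hθ
  have h2 := hG ηm θm hη hθ0 hθ
  have hGlim : Tendsto (fun m => G (x + θm m • ηm m)) atTop (𝓝 (G x)) := by
    have h3 : Tendsto (fun m => θm m • ((θm m)⁻¹ • (G (x + θm m • ηm m) - G x)))
        atTop (𝓝 ((0 : ℝ) • b)) := hθ.smul h2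
    rw [zero_smul] at h3
    have h4 : Tendsto (fun m => G (x + θm m • ηm m) - G x) atTop (𝓝 0) := by
      refine h3.congr fun m => ?_
      rw [smul_inv_smul₀ (hθ0 m)]
    have h5 := h4.add (tendsto_const_nhds (x := G x))
    simpa using h5
  have h6 := (h1.mul hGlim).add ((tendsto_const_nhds (x := F x)).mul h2)
  refine h6.congr fun m => ?_
  simp only [smul_eq_mul]
  ring

theorem hasChainDiff_sum {ι : Type*} (s : Finset ι) (F : ι → X → ℝ) (v : ι → ℝ) {x d : X}
    (h : ∀ p ∈ s, HasChainDiff (F p) x d (v p)) :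
    HasChainDiff (fun y => ∑ p ∈ s, F p y) x d (∑ p ∈ s, v p) := by
  intro ηm θm hη hθ0 hθ
  have h1 := tendsto_finset_sum s (fun p hp => h p hp ηm θm hη hθ0 hθ)
  refine h1.congr fun m => ?_
  simp only [smul_eq_mul, Finset.mul_sum, mul_sub, Finset.sum_sub_distrib]

theorem hasChainDiffN_cast {f : X → ℝ} {k k' : ℕ} (h : k = k') {d : Fin k → X}
    {d' : Fin k' → X} (hd : ∀ j : Fin k, d j = d' (Fin.cast h j)) {x : X} {v : ℝ} :
    HasChainDiffN f k d x v ↔ HasChainDiffN f k' d' x v := by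
  subst h
  have hdd : d = d' := funext fun j => hd j
  rw [hdd]

private lemma dirsOf_eq_orderEmb {n : ℕ} (η : Fin n → X) (I : Finset (Fin n))
    (j : Fin I.card) : dirsOf η I j = η (I.orderEmbOfFin rfl j) := by
  rw [dirsOf, Finset.coe_orderIsoOfFin_apply]

theorem chainDiffN_erase_iff {f : X → ℝ} {n : ℕ} {η : Fin n → X} {I : Finset (Fin n)}
    {i : Fin n} (hi : i ∈ I) (hmax : ∀ j ∈ I, j ≤ i) {x : X} {v : ℝ} :
    HasChainDiffN f I.card (dirsOf η I) x v ↔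
      ∃ D : X → ℝ,
        (∀ᶠ y in 𝓝 x, HasChainDiffN f (I.erase i).card (dirsOf η (I.erase i)) y (D y)) ∧
        HasChainDiff D x (η i) v := by
  have hk : I.card = (I.erase i).card + 1 := by
    rw [Finset.card_erase_of_mem hi]
    have hpos : 0 < I.card := Finset.card_pos.2 ⟨i, hi⟩
    omega
  have hlast : I.orderEmbOfFin hk (Fin.last _) = i := by
    have h1 := Finset.orderEmbOfFin_last hk (Nat.succ_pos _)
    have h2 : (⟨(I.erase i).card + 1 - 1, Nat.sub_lt (Nat.succ_pos _) Nat.one_pos⟩ :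
        Fin ((I.erase i).card + 1)) = Fin.last _ := by
      ext; simp
    rw [h2] at h1
    rw [h1]
    exact le_antisymm (Finset.max'_le _ _ _ hmax) (Finset.le_max' _ _ hi)
  have hinit : ∀ j : Fin (I.erase i).card,
      I.orderEmbOfFin hk (Fin.castSucc j) = (I.erase i).orderEmbOfFin rfl j := by
    have hmono : StrictMono (fun j : Fin (I.erase i).card =>
        I.orderEmbOfFin hk (Fin.castSucc j)) := fun a b hab =>
      (I.orderEmbOfFin hk).strictMono (by simpa using hab)
    have hmem : ∀ j, (fun j : Fin (I.erase i).card =>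
        I.orderEmbOfFin hk (Fin.castSucc j)) j ∈ I.erase i := by
      intro j
      refine Finset.mem_erase.2 ⟨ne_of_lt ?_, Finset.orderEmbOfFin_mem _ _ _⟩
      exact lt_of_lt_of_eq ((I.orderEmbOfFin hk).strictMono (Fin.castSucc_lt_last j)) hlast
    exact fun j => congrFun (Finset.orderEmbOfFin_unique rfl hmem hmono) j
  have hd : ∀ j : Fin I.card,
      dirsOf η I j = (Fin.snoc (dirsOf η (I.erase i)) (η i) :
        Fin ((I.erase i).card + 1) → X) (Fin.cast hk j) := by
    intro j
    rcases Fin.eq_castSucc_or_eq_last (Fin.cast hk j) with ⟨j₀, hj₀⟩ | hj₀ <;> rw [hj₀]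
    · rw [Fin.snoc_castSucc, dirsOf_eq_orderEmb, dirsOf_eq_orderEmb, ← hinit j₀]
      congr 1
      rw [Finset.orderEmbOfFin_eq_orderEmbOfFin_iff]
      have hval : (Fin.cast hk j).val = (Fin.castSucc j₀).val := by rw [hj₀]
      simpa using hval
    · rw [Fin.snoc_last, dirsOf_eq_orderEmb, ← hlast]
      congr 1
      rw [Finset.orderEmbOfFin_eq_orderEmbOfFin_iff]
      have hval : (Fin.cast hk j).val = (Fin.last (I.erase i).card).val := by rw [hj₀]
      simpa using hval
  rw [hasChainDiffN_cast hk hd, hasChainDiffN_succ_iff, Fin.init_snoc, Fin.snoc_last]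

open Classical in
/-- The value of the `|I|`-th chain differential of `F` at `y` in the directions indexed
by `I`, if it exists (and `0` otherwise). -/
noncomputable def chainVal (F : X → ℝ) {n : ℕ} (η : Fin n → X) (I : Finset (Fin n))
    (y : X) : ℝ :=
  if h : ∃ v, HasChainDiffN F I.card (dirsOf η I) y v then h.choose else 0

theorem chainVal_eq {F : X → ℝ} {n : ℕ} {η : Fin n → X} {I : Finset (Fin n)} {y : X} {v : ℝ}
    (h : HasChainDiffN F I.card (dirsOf η I) y v) : chainVal F η I y = v := by
  rw [chainVal, dif_pos ⟨v, h⟩]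
  exact hasChainDiffN_unique (Exists.choose_spec (⟨v, h⟩ : ∃ v, _)) h

theorem main_lemma {n : ℕ} (η : Fin n → X) (f g : X → ℝ) :
    ∀ (I : Finset (Fin n)) (x : X),
      (∀ J ∈ I.powerset,
        (∃ v, HasChainDiffN f J.card (dirsOf η J) x v) ∧
        (∃ v, HasChainDiffN g J.card (dirsOf η J) x v)) →
      HasChainDiffN (fun u => f u * g u) I.card (dirsOf η I) x
        (∑ π ∈ I.powerset, chainVal f η π x * chainVal g η (I \ π) x) := by
  intro I
  induction I using Finset.strongInduction with
  | _ I ih =>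
    intro x hx
    rcases I.eq_empty_or_nonempty with rfl | hI
    · have h0 : ∑ π ∈ (∅ : Finset (Fin n)).powerset,
          chainVal f η π x * chainVal g η (∅ \ π) x = f x * g x := by
        rw [Finset.powerset_empty, Finset.sum_singleton]
        have h1 : chainVal f η (∅ : Finset (Fin n)) x = f x := chainVal_eq rfl
        have h2 : chainVal g η ((∅ : Finset (Fin n)) \ ∅) x = g x := by
          rw [Finset.sdiff_empty]
          exact chainVal_eq rfl
        rw [h1, h2]
      rw [h0]
      exact rfl
    · have hi : I.max' hI ∈ I := Finset.max'_mem _ _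
      have hmax : ∀ j ∈ I, j ≤ I.max' hI := fun j hj => Finset.le_max' _ _ hj
      set i := I.max' hI with hidef
      have hiI' : i ∉ I.erase i := Finset.notMem_erase _ _
      -- pointwise chain differential of the canonical value functions in direction η i
      have key : ∀ (F : X → ℝ),
          (∀ J ∈ I.powerset, ∃ v, HasChainDiffN F J.card (dirsOf η J) x v) →
          ∀ σ ⊆ I.erase i,
            HasChainDiff (chainVal F η σ) x (η i) (chainVal F η (insert i σ) x) := by
        intro F hF σ hσ
        have hσI : insert i σ ∈ I.powerset :=
          Finset.mem_powerset.2 (Finset.insert_subset hi (hσ.trans (Finset.erase_subset _ _)))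
        obtain ⟨v, hv⟩ := hF _ hσI
        have hΦ : chainVal F η (insert i σ) x = v := chainVal_eq hv
        have hiσ : i ∉ σ := fun h => hiI' (hσ h)
        have hmaxσ : ∀ j ∈ insert i σ, j ≤ i := by
          intro j hj
          rcases Finset.mem_insert.1 hj with rfl | hj'
          · exact le_refl _
          · exact hmax j (Finset.erase_subset _ _ (hσ hj'))
        rw [chainDiffN_erase_iff (Finset.mem_insert_self i σ) hmaxσ,
          Finset.erase_insert hiσ] at hv
        obtain ⟨D₀, hD₀, hd₀⟩ := hv
        have hcongr : D₀ =ᶠ[𝓝 x] chainVal F η σ := by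
          filter_upwards [hD₀] with y hy
          exact (chainVal_eq hy).symm
        rw [hΦ]
        exact hasChainDiff_congr hcongr hd₀
      -- eventual existence of all lower differentials near x
      have hev : ∀ᶠ y in 𝓝 x, ∀ J ∈ (I.erase i).powerset,
          (∃ v, HasChainDiffN f J.card (dirsOf η J) y v) ∧
          (∃ v, HasChainDiffN g J.card (dirsOf η J) y v) := by
        rw [Filter.eventually_all_finset]
        intro J hJ
        have hJ' : J ⊆ I.erase i := Finset.mem_powerset.1 hJ
        have hiJ : i ∉ J := fun h => hiI' (hJ' h)
        have hJI : insert i J ∈ I.powerset :=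
          Finset.mem_powerset.2 (Finset.insert_subset hi (hJ'.trans (Finset.erase_subset _ _)))
        have hmaxJ : ∀ j ∈ insert i J, j ≤ i := by
          intro j hj
          rcases Finset.mem_insert.1 hj with rfl | hj'
          · exact le_refl _
          · exact hmax j (Finset.erase_subset _ _ (hJ' hj'))
        obtain ⟨⟨vf, hvf⟩, ⟨vg, hvg⟩⟩ := hx _ hJI
        rw [chainDiffN_erase_iff (Finset.mem_insert_self i J) hmaxJ,
          Finset.erase_insert hiJ] at hvf
        rw [chainDiffN_erase_iff (Finset.mem_insert_self i J) hmaxJ,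
          Finset.erase_insert hiJ] at hvg
        obtain ⟨Dφ, hDφ, -⟩ := hvf
        obtain ⟨Dγ, hDγ, -⟩ := hvg
        filter_upwards [hDφ, hDγ] with y h1 h2
        exact ⟨⟨_, h1⟩, ⟨_, h2⟩⟩
      rw [chainDiffN_erase_iff hi hmax]
      refine ⟨fun y => ∑ π ∈ (I.erase i).powerset,
        chainVal f η π y * chainVal g η (I.erase i \ π) y, ?_, ?_⟩
      · filter_upwards [hev] with y hy
        exact ih (I.erase i) (Finset.erase_ssubset hi) y hy
      · have sumd := hasChainDiff_sum (I.erase i).powerset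
          (fun π y => chainVal f η π y * chainVal g η (I.erase i \ π) y)
          (fun π => chainVal f η (insert i π) x * chainVal g η (I.erase i \ π) x +
            chainVal f η π x * chainVal g η (insert i (I.erase i \ π)) x)
          (fun π hπ => hasChainDiff_mul
            (key f (fun J hJ => (hx J hJ).1) π (Finset.mem_powerset.1 hπ))
            (key g (fun J hJ => (hx J hJ).2) (I.erase i \ π) Finset.sdiff_subset))
        have hval : ∑ π ∈ I.powerset, chainVal f η π x * chainVal g η (I \ π) x
            = ∑ π ∈ (I.erase i).powerset,
                (chainVal f η (insert i π) x * chainVal g η (I.erase i \ π) x +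
                 chainVal f η π x * chainVal g η (insert i (I.erase i \ π)) x) := by
          have sd1 : ∀ π ∈ (I.erase i).powerset,
              insert i (I.erase i) \ π = insert i (I.erase i \ π) := by
            intro π hπ
            have hiπ : i ∉ π := fun h => hiI' (Finset.mem_powerset.1 hπ h)
            ext a
            simp only [Finset.mem_sdiff, Finset.mem_insert]
            constructor
            · rintro ⟨(rfl | ha), h2⟩
              · exact Or.inl rfl
              · exact Or.inr ⟨ha, h2⟩
            · rintro (rfl | ⟨h1, h2⟩)
              · exact ⟨Or.inl rfl, hiπ⟩
              · exact ⟨Or.inr h1, h2⟩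
          have sd2 : ∀ π ∈ (I.erase i).powerset,
              insert i (I.erase i) \ insert i π = I.erase i \ π := by
            intro π hπ
            ext a
            simp only [Finset.mem_sdiff, Finset.mem_insert, not_or]
            constructor
            · rintro ⟨(rfl | h1), h2, h3⟩
              · exact absurd rfl h2
              · exact ⟨h1, h3⟩
            · rintro ⟨h1, h2⟩
              exact ⟨Or.inr h1, fun hai => hiI' (hai ▸ h1), h2⟩
          conv_lhs => rw [← Finset.insert_erase hi]
          rw [Finset.sum_powerset_insert hiI', Finset.sum_add_distrib,
            add_comm ((∑ π ∈ (I.erase i).powerset,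
              chainVal f η π x * chainVal g η (insert i (I.erase i) \ π) x)) _]
          congr 1
          · exact Finset.sum_congr rfl fun π hπ => by rw [sd2 π hπ]
          · exact Finset.sum_congr rfl fun π hπ => by rw [sd1 π hπ]
        rw [hval]
        exact sumd

end Aux

/-- General higher-order product rule (Leibniz rule) for chain differentials. -/
theorem product_rule_higher_order
    {X : Type*}
    [AddCommGroup X] [Module ℝ X] [TopologicalSpace X] [IsTopologicalAddGroup X]
    [ContinuousSMul ℝ X] [LocallyConvexSpace ℝ X]
    (n : ℕ) (f g : X → ℝ) (x : X) (η : Fin n → X)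
    (Df Dg : Finset (Fin n) → ℝ)
    (hf : ∀ I : Finset (Fin n), HasChainDiffN f I.card (dirsOf η I) x (Df I))
    (hg : ∀ I : Finset (Fin n), HasChainDiffN g I.card (dirsOf η I) x (Dg I)) :
    HasChainDiffN (fun u => f u * g u) n η x (∑ π : Finset (Fin n), Df π * Dg πᶜ) := by
  have hx : ∀ J ∈ (Finset.univ : Finset (Fin n)).powerset,
      (∃ v, HasChainDiffN f J.card (dirsOf η J) x v) ∧
      (∃ v, HasChainDiffN g J.card (dirsOf η J) x v) :=
    fun J _ => ⟨⟨Df J, hf J⟩, ⟨Dg J, hg J⟩⟩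
  have H := main_lemma η f g Finset.univ x hx
  have hcard : (Finset.univ : Finset (Fin n)).card = n := Finset.card_fin n
  have hid : (fun j : Fin n => j) = ⇑(Finset.univ.orderEmbOfFin hcard) :=
    Finset.orderEmbOfFin_unique hcard (fun _ => Finset.mem_univ _) strictMono_id
  have hd : ∀ j : Fin (Finset.univ : Finset (Fin n)).card,
      dirsOf η Finset.univ j = η (Fin.cast hcard j) := by
    intro j
    rw [dirsOf_eq_orderEmb]
    congr 1
    calc Finset.univ.orderEmbOfFin rfl j
        = Finset.univ.orderEmbOfFin hcard (Fin.cast hcard j) := by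
          rw [Finset.orderEmbOfFin_eq_orderEmbOfFin_iff]
          simp
          rfl
      _ = Fin.cast hcard j := (congrFun hid _).symm
  have H' := (hasChainDiffN_cast hcard hd).mp H
  have hS : ∑ π ∈ (Finset.univ : Finset (Fin n)).powerset,
      chainVal f η π x * chainVal g η (Finset.univ \ π) x
      = ∑ π : Finset (Fin n), Df π * Dg πᶜ := by
    rw [Finset.powerset_univ]
    refine Finset.sum_congr rfl fun π _ => ?_
    rw [chainVal_eq (hf π), ← Finset.compl_eq_univ_sdiff, chainVal_eq (hg πᶜ)]
  exact hS ▸ H'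
end

section
/- Mean value identity along a direction: Let X be a real locally convex topological vector space, g : X → ℝ, y ∈ X, ξ ∈ X, and θ > 0 a real number. Suppose that for every t ∈ [0, θ] the chain differential δg(y + t • ξ; ξ) exists. Then there exists c ∈ [0, θ] such that g(y + θ • ξ) − g(y) = θ · δg(y + c • ξ; ξ). -/
open Filter Topology

/-- Mean value identity along a direction. -/
theorem mean_value_identity
    {X : Type*}
    [AddCommGroup X] [Module ℝ X] [TopologicalSpace X] [IsTopologicalAddGroup X]
    [ContinuousSMul ℝ X] [LocallyConvexSpace ℝ X]
    (g : X → ℝ) (y ξ : X) (θ : ℝ) (hθ : 0 < θ)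
    (D : ℝ → ℝ)
    (hD : ∀ t ∈ Set.Icc (0 : ℝ) θ, HasChainDiff g (y + t • ξ) ξ (D t)) :
    ∃ c ∈ Set.Icc (0 : ℝ) θ, g (y + θ • ξ) - g y = θ * D c := by
  set φ : ℝ → ℝ := fun t => g (y + t • ξ) with hφ
  have key : ∀ t ∈ Set.Icc (0 : ℝ) θ, HasDerivAt φ (D t) t := by
    intro t ht
    rw [hasDerivAt_iff_tendsto_slope]
    rw [tendsto_iff_seq_tendsto]
    intro s hs
    have hs' : ∀ᶠ m in atTop, s m ∈ ({t}ᶜ : Set ℝ) ∧ True :=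
      (hs.eventually self_mem_nhdsWithin).and (Eventually.of_forall fun _ => trivial)
    have hst : Tendsto s atTop (𝓝 t) := hs.mono_right nhdsWithin_le_nhds
    have hne : ∀ᶠ m in atTop, s m - t ≠ 0 := by
      filter_upwards [hs.eventually self_mem_nhdsWithin] with m hm
      exact sub_ne_zero.mpr hm
    obtain ⟨N, hN⟩ := eventually_atTop.mp hne
    -- shift the sequence so that all terms are nonzero
    set θm : ℕ → ℝ := fun m => s (m + N) - t with hθm
    have hθm0 : ∀ m, θm m ≠ 0 := fun m => hN (m + N) (Nat.le_add_left N m)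
    have hθmt : Tendsto θm atTop (𝓝 (0 : ℝ)) := by
      have : Tendsto (fun m => s (m + N)) atTop (𝓝 t) :=
        hst.comp (tendsto_atTop_mono (fun m => Nat.le_add_right m N) tendsto_id)
      simpa [hθm] using this.sub_const t
    have h1 := hD t ht (fun _ => ξ) θm tendsto_const_nhds hθm0 hθmt
    have heq : ∀ m, (θm m)⁻¹ • (g ((y + t • ξ) + θm m • ξ) - g (y + t • ξ))
        = slope φ t (s (m + N)) := by
      intro m
      have : y + t • ξ + θm m • ξ = y + s (m + N) • ξ := by
        rw [hθm]; simp [sub_smul, add_smul]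
      simp [slope, this, hφ, hθm, smul_eq_mul]
      exact Or.inl (congrArg g this)
    have h2 : Tendsto (fun m => slope φ t (s (m + N))) atTop (𝓝 (D t)) := by
      refine h1.congr fun m => heq m
    have : Tendsto (fun m => slope φ t (s m)) atTop (𝓝 (D t)) :=
      (tendsto_add_atTop_iff_nat N).mp h2
    exact this
  have hcont : ContinuousOn φ (Set.Icc 0 θ) := fun t ht =>
    (key t ht).continuousAt.continuousWithinAt
  have hder : ∀ t ∈ Set.Ioo (0 : ℝ) θ, HasDerivAt φ (D t) t := fun t ht =>
    key t (Set.mem_Icc_of_Ioo ht)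
  obtain ⟨c, hc, hceq⟩ := exists_hasDerivAt_eq_slope φ D hθ hcont hder
  refine ⟨c, Set.mem_Icc_of_Ioo hc, ?_⟩
  have : φ θ - φ 0 = θ * D c := by
    rw [hceq, sub_zero]; field_simp [hθ.ne']
  simpa [hφ] using this.symm ▸ by simp [hφ]
end
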